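/- Let y be a process such that each y_τ is 𝓕_τ-measurable and integrable, and y_τ = φ_0(τ) + Σ_{m=1}^p φ_m(τ) y_{τ−m} + ε_τ almost surely for every τ ∈ ℤ. Then for every t ∈ ℤ and every integer N ≥ 1, the forecast error of the N-step-ahead predictor satisfies, almost surely, y_t − E[y_t | 𝓕_{t−N}] = Σ_{r=0}^{N−1} ξ_{t,r} ε_{t−r}. -/

import Mathlib

open Finset

/-- The `k × k` solution matrix `Φ_{t,k}`: its (1-based) `(i,j)` entry is `-1` if `i = j-1`,
`φ_{1+i−j}(t−k+i)` if `0 ≤ i−j ≤ p−1`, and `0` otherwise. -/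
noncomputable def PhiMat (p : ℕ) (φ : ℕ → ℤ → ℝ) (t : ℤ) (k : ℕ) :
    Matrix (Fin k) (Fin k) ℝ :=
  fun i j =>
    if (i : ℕ) + 1 = (j : ℕ) then -1
    else if (j : ℕ) ≤ (i : ℕ) ∧ (i : ℕ) - (j : ℕ) + 1 ≤ p then
      φ ((i : ℕ) - (j : ℕ) + 1) (t - (k : ℤ) + (i : ℕ) + 1)
    else 0

/-- The Hessenbergian (Green function) `ξ_{t,k} = det Φ_{t,k}`, with the conventions
`ξ_{t,0} = 1` (empty determinant) and `ξ_{t,k} = 0` for `k < 0`. -/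
noncomputable def xi (p : ℕ) (φ : ℕ → ℤ → ℝ) (t : ℤ) (k : ℤ) : ℝ :=
  if 0 ≤ k then (PhiMat p φ t k.toNat).det else 0

section AuxPAR

noncomputable def phib (p : ℕ) (φ : ℕ → ℤ → ℝ) (m : ℕ) (x : ℤ) : ℝ :=
  if m ≤ p then φ m x else 0

noncomputable def PsiMat (p : ℕ) (φ : ℕ → ℤ → ℝ) (t : ℤ) (s k : ℕ) :
    Matrix (Fin k) (Fin k) ℝ :=
  fun i j => if (j : ℕ) = 0 then phib p φ ((i : ℕ) + 1 + s) (t - (k : ℤ) + (i : ℕ) + 1)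
    else PhiMat p φ t k i j

variable (p : ℕ) (φ : ℕ → ℤ → ℝ) (t : ℤ)

lemma xi_natCast (k : ℕ) : xi p φ t (k : ℤ) = (PhiMat p φ t k).det := by
  simp [xi]

lemma xi_zero : xi p φ t 0 = 1 := by
  have : xi p φ t ((0:ℕ):ℤ) = (PhiMat p φ t 0).det := xi_natCast p φ t 0
  simpa [Matrix.det_fin_zero] using this

lemma xi_neg {k : ℤ} (hk : k < 0) : xi p φ t k = 0 := by
  simp [xi, not_le.mpr hk]

lemma psiMat_zero (k : ℕ) : PsiMat p φ t 0 k = PhiMat p φ t k := by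
  ext a b
  simp only [PsiMat, PhiMat, phib]
  split_ifs <;> first | rfl | omega | (congr 1 <;> omega)

lemma psi_det_one (s : ℕ) : (PsiMat p φ t s 1).det = phib p φ (1 + s) t := by
  rw [Matrix.det_fin_one]
  simp only [PsiMat]
  norm_num

lemma psi_minor_zero (s k : ℕ) :
    (PsiMat p φ t s (k+2)).submatrix Fin.succ ((0 : Fin (k+2)).succAbove)
      = PsiMat p φ t 0 (k+1) := by
  ext a b
  simp only [Matrix.submatrix_apply, Fin.succAbove_zero, PsiMat, PhiMat, phib, Fin.val_succ]
  split_ifs <;>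
    first
      | rfl
      | omega
      | contradiction
      | (congr 1 <;> [omega; (push_cast; ring)])

lemma psi_minor_one (s k : ℕ) :
    (PsiMat p φ t s (k+2)).submatrix Fin.succ ((1 : Fin (k+2)).succAbove)
      = PsiMat p φ t (s+1) (k+1) := by
  ext a b
  have h1v : ((1 : Fin (k+2)) : ℕ) = 1 := by
    rw [Fin.val_one']; exact Nat.mod_eq_of_lt (by omega)
  have hcol : (((1 : Fin (k+2)).succAbove b) : ℕ)
      = if (b : ℕ) = 0 then 0 else (b : ℕ) + 1 := by
    unfold Fin.succAbove
    by_cases hb : b.castSucc < (1 : Fin (k+2))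
    · have hb' : (b : ℕ) < 1 := by simpa [Fin.lt_def, h1v] using hb
      rw [if_pos hb, Fin.coe_castSucc, if_pos (by omega)]
      omega
    · have hb' : ¬ (b : ℕ) < 1 := by simpa [Fin.lt_def, h1v] using hb
      rw [if_neg hb, Fin.val_succ, if_neg (by omega)]
  simp only [Matrix.submatrix_apply, PsiMat, PhiMat, phib, Fin.val_succ, hcol]
  split_ifs <;>
    first
      | rfl
      | omega
      | contradiction
      | (congr 1 <;> [omega; (push_cast; ring)])

lemma psi_det_rec (s k : ℕ) :
    (PsiMat p φ t s (k+2)).det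
      = phib p φ (1 + s) (t - (k+1)) * (PsiMat p φ t 0 (k+1)).det
        + (PsiMat p φ t (s+1) (k+1)).det := by
  have h1v : ((1 : Fin (k+2)) : ℕ) = 1 := by
    rw [Fin.val_one']; exact Nat.mod_eq_of_lt (by omega)
  have h00 : PsiMat p φ t s (k+2) 0 0 = phib p φ (1 + s) (t - (k+1)) := by
    simp only [PsiMat, Fin.val_zero, if_pos rfl]
    norm_num
    congr 1
    ring
  have h01 : PsiMat p φ t s (k+2) 0 1 = -1 := by
    simp only [PsiMat, PhiMat, Fin.val_zero, h1v]
    norm_num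
  have hrest : ∀ i : Fin k, PsiMat p φ t s (k+2) 0 i.succ.succ = 0 := by
    intro i
    simp only [PsiMat, PhiMat, Fin.val_zero, Fin.val_succ]
    split_ifs <;> simp_all <;> omega
  rw [Matrix.det_succ_row_zero, Fin.sum_univ_succ, Fin.sum_univ_succ]
  have hz : (∑ i : Fin k,
      (-1 : ℝ) ^ ((i.succ.succ : Fin (k+2)) : ℕ) * PsiMat p φ t s (k+2) 0 i.succ.succ *
        ((PsiMat p φ t s (k+2)).submatrix Fin.succ i.succ.succ.succAbove).det) = 0 :=
    Finset.sum_eq_zero fun i _ => by rw [hrest i]; ring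
  rw [hz, Fin.succ_zero_eq_one]
  rw [h00, h01, psi_minor_zero, psi_minor_one]
  simp [h1v]

lemma phib_mul_congr {m m' : ℕ} {x x' : ℤ} {a b : ℝ} (hm : m = m') (hx : x = x')
    (hab : a = b) : phib p φ m x * a = phib p φ m' x' * b := by rw [hm, hx, hab]

lemma psi_det_formula : ∀ k s : ℕ, (PsiMat p φ t s (k+1)).det
    = ∑ u ∈ range (k+1), phib p φ (1 + s + u) (t - (k+1) + 1 + u) * xi p φ t ((k : ℤ) - u) := by
  intro k
  induction k with
  | zero =>
    intro s
    rw [psi_det_one, Finset.sum_range_one]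
    rw [show ((0:ℕ):ℤ) - ((0:ℕ):ℤ) = 0 by norm_num, xi_zero, mul_one]
    exact congrArg _ (by push_cast; ring)
  | succ k ih =>
    intro s
    rw [psi_det_rec, ih (s+1), psiMat_zero, ← xi_natCast]
    conv_rhs => rw [Finset.sum_range_succ']
    rw [add_comm]
    congr 1
    · refine Finset.sum_congr rfl fun u hu => phib_mul_congr p φ (by omega) (by push_cast; ring)
        (congrArg _ (by push_cast; ring))
    · exact phib_mul_congr p φ (by omega) (by push_cast; ring)
        (congrArg _ (by push_cast; ring))

lemma mul_phib_congr {m m' : ℕ} {x x' : ℤ} {a b : ℝ} (hm : m = m') (hx : x = x')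
    (hab : a = b) : a * phib p φ m x = b * phib p φ m' x' := by rw [hm, hx, hab]

noncomputable def coefA (p : ℕ) (φ : ℕ → ℤ → ℝ) (t : ℤ) (N j : ℕ) : ℝ :=
  ∑ r ∈ range N, xi p φ t r * phib p φ (j + (N - 1 - r)) (t - r)

lemma coefA_gt {j : ℕ} (hj : p < j) (N : ℕ) : coefA p φ t N j = 0 :=
  Finset.sum_eq_zero fun r _ => by
    rw [phib, if_neg (by omega), mul_zero]

lemma coefA_rec (N j : ℕ) :
    coefA p φ t (N+1) j = xi p φ t N * phib p φ j (t - N) + coefA p φ t N (j+1) := by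
  rw [coefA, Finset.sum_range_succ, add_comm, coefA]
  congr 1
  · exact mul_phib_congr p φ (by omega) rfl rfl
  · exact Finset.sum_congr rfl fun r hr =>
      mul_phib_congr p φ (by simp only [Finset.mem_range] at hr; omega) rfl rfl

lemma coefA_one {N : ℕ} (hN : 1 ≤ N) : coefA p φ t N 1 = xi p φ t (N : ℤ) := by
  obtain ⟨k, rfl⟩ : ∃ k, N = k + 1 := ⟨N - 1, by omega⟩
  rw [xi_natCast, ← psiMat_zero, psi_det_formula, coefA, ← Finset.sum_range_reflect]
  refine Finset.sum_congr rfl fun i hi => ?_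
  simp only [Finset.mem_range] at hi
  rw [mul_comm]
  exact phib_mul_congr p φ (by omega) (by omega) (congrArg _ (by omega))

lemma star_step_alg (hp : 1 ≤ p) (N : ℕ) (hN : 1 ≤ N) (Y : ℤ → ℝ) (E : ℝ)
    (hR : Y (t - (N : ℤ)) = φ 0 (t - (N : ℤ))
      + (∑ m ∈ Icc 1 p, φ m (t - (N : ℤ)) * Y (t - (N : ℤ) - (m : ℤ))) + E) :
    (∑ j ∈ Icc 1 p, coefA p φ t N j * Y (t - (N : ℤ) + 1 - (j : ℤ)))
      = xi p φ t (N : ℤ) * (φ 0 (t - (N : ℤ)) + E)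
        + ∑ j ∈ Icc 1 p, coefA p φ t (N+1) j * Y (t - ((N+1 : ℕ) : ℤ) + 1 - (j : ℤ)) := by
  have h2 : ∑ j ∈ Icc 1 p, coefA p φ t (N+1) j * Y (t - ((N+1 : ℕ) : ℤ) + 1 - (j : ℤ))
      = xi p φ t (N : ℤ) * (∑ j ∈ Icc 1 p, φ j (t - (N : ℤ)) * Y (t - (N : ℤ) - (j : ℤ)))
        + ∑ j ∈ Icc 1 p, coefA p φ t N (j+1) * Y (t - (N : ℤ) - (j : ℤ)) := by
    rw [Finset.mul_sum, ← Finset.sum_add_distrib]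
    refine Finset.sum_congr rfl fun j hj => ?_
    rw [coefA_rec, add_mul, phib, if_pos (Finset.mem_Icc.mp hj).2,
      show t - ((N+1 : ℕ) : ℤ) + 1 - (j : ℤ) = t - (N : ℤ) - (j : ℤ) by push_cast; ring]
    ring
  have h3 : ∑ j ∈ (Icc 1 p).erase 1, coefA p φ t N j * Y (t - (N : ℤ) + 1 - (j : ℤ))
      = ∑ j ∈ Icc 1 p, coefA p φ t N (j+1) * Y (t - (N : ℤ) - (j : ℤ)) := by
    obtain ⟨q, rfl⟩ : ∃ q, p = q + 1 := ⟨p - 1, by omega⟩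
    rw [Finset.Icc_erase_left, ← Finset.Icc_add_one_left_eq_Ioc, ← Finset.Ico_add_one_right_eq_Icc, ← Finset.Ico_add_one_right_eq_Icc,
      Finset.sum_Ico_eq_sum_range, Finset.sum_Ico_eq_sum_range]
    rw [show q + 1 + 1 - (1 + 1) = q by omega, show q + 1 + 1 - 1 = q + 1 by omega,
      Finset.sum_range_succ,
      coefA_gt (q+1) φ t (show q + 1 < 1 + q + 1 by omega), zero_mul, add_zero]
    refine Finset.sum_congr rfl fun i hi => ?_
    rw [show 1 + 1 + i = (1 + i) + 1 by omega,
      show t - ((N : ℕ) : ℤ) + 1 - ((((1+i)+1 : ℕ)) : ℤ)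
        = t - ((N : ℕ) : ℤ) - ((1+i : ℕ) : ℤ) by push_cast; ring]
  rw [← Finset.add_sum_erase _ _ (Finset.mem_Icc.mpr ⟨le_refl 1, hp⟩),
    show t - (N : ℤ) + 1 - ((1:ℕ) : ℤ) = t - (N : ℤ) by push_cast; ring,
    coefA_one p φ t hN, hR, h2, h3]
  ring

lemma star {Ω : Type*} {m0 : MeasurableSpace Ω} {μ : MeasureTheory.Measure Ω}
    (hp : 1 ≤ p) (ε y : ℤ → Ω → ℝ)
    (hy : ∀ τ : ℤ, y τ =ᵐ[μ] fun ω =>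
      φ 0 τ + (∑ m ∈ Finset.Icc 1 p, φ m τ * y (τ - m) ω) + ε τ ω) :
    ∀ N : ℕ, 1 ≤ N →
      y t =ᵐ[μ] fun ω =>
        (∑ r ∈ range N, xi p φ t r * (φ 0 (t - r) + ε (t - r) ω))
          + ∑ j ∈ Icc 1 p, coefA p φ t N j * y (t - N + 1 - j) ω := by
  intro N
  induction N with
  | zero => omega
  | succ N ih =>
    intro _
    rcases Nat.eq_zero_or_pos N with hN0 | hN1
    · subst hN0
      have hc : ∀ j, coefA p φ t 1 j = phib p φ j t := by
        intro j; simp [coefA, xi_zero]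
      filter_upwards [hy t] with ω h
      rw [h, Finset.sum_range_one]
      simp only [Nat.cast_zero, sub_zero, xi_zero, one_mul, hc]
      have hsum : (∑ j ∈ Icc 1 p, phib p φ j t * y (t - ((1:ℕ) : ℤ) + 1 - (j : ℤ)) ω)
          = ∑ j ∈ Icc 1 p, φ j t * y (t - (j : ℤ)) ω :=
        Finset.sum_congr rfl fun j hj => by
          rw [phib, if_pos (Finset.mem_Icc.mp hj).2,
            show t - ((1:ℕ) : ℤ) + 1 - (j : ℤ) = t - (j : ℤ) by push_cast; ring]
      rw [hsum]
      ring
    · filter_upwards [ih hN1, hy (t - (N : ℤ))] with ω hI hR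
      have key : (∑ j ∈ Icc 1 p, coefA p φ t N j * y (t - (N : ℤ) + 1 - (j : ℤ)) ω)
          = xi p φ t (N : ℤ) * (φ 0 (t - (N : ℤ)) + ε (t - (N : ℤ)) ω)
            + ∑ j ∈ Icc 1 p, coefA p φ t (N+1) j * y (t - ((N+1 : ℕ) : ℤ) + 1 - (j : ℤ)) ω :=
        star_step_alg p φ t hp N hN1 (fun s => y s ω) (ε (t - (N : ℤ)) ω) hR
      rw [hI, Finset.sum_range_succ, key]
      ring

open MeasureTheory Filter

theorem par_forecast_error'
    (hp : 1 ≤ p)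
    {Ω : Type*} {m0 : MeasurableSpace Ω} {μ : Measure Ω} [IsProbabilityMeasure μ]
    (𝓕 : Filtration ℤ m0)
    (ε : ℤ → Ω → ℝ)
    (hεmeas : ∀ τ : ℤ, StronglyMeasurable[𝓕 τ] (ε τ))
    (hεL2 : ∀ τ : ℤ, MemLp (ε τ) 2 μ)
    (hεmart : ∀ τ : ℤ, μ[ε τ | 𝓕 (τ - 1)] =ᵐ[μ] 0)
    (y : ℤ → Ω → ℝ)
    (hymeas : ∀ τ : ℤ, StronglyMeasurable[𝓕 τ] (y τ))
    (hyint : ∀ τ : ℤ, Integrable (y τ) μ)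
    (hy : ∀ τ : ℤ, y τ =ᵐ[μ] fun ω =>
      φ 0 τ + (∑ m ∈ Finset.Icc 1 p, φ m τ * y (τ - m) ω) + ε τ ω)
    (N : ℕ) (hN : 1 ≤ N) :
    (fun ω => y t ω - (μ[y t | 𝓕 (t - N)]) ω) =ᵐ[μ]
      fun ω => ∑ r ∈ Finset.range N, xi p φ t r * ε (t - r) ω := by
  have hstar := star p φ t hp ε y hy N hN
  set D : Ω → ℝ := fun ω => (∑ r ∈ range N, xi p φ t r * φ 0 (t - r))
      + ∑ j ∈ Icc 1 p, coefA p φ t N j * y (t - N + 1 - j) ω with hD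
  set M : Ω → ℝ := fun ω => ∑ r ∈ range N, xi p φ t r * ε (t - r) ω with hM
  have hsplit : (fun ω => (∑ r ∈ range N, xi p φ t r * (φ 0 (t - r) + ε (t - r) ω))
      + ∑ j ∈ Icc 1 p, coefA p φ t N j * y (t - N + 1 - j) ω) = fun ω => D ω + M ω := by
    funext ω
    rw [hD, hM]
    have h1 : ∀ r ∈ range N, xi p φ t r * (φ 0 (t - r) + ε (t - r) ω)
        = xi p φ t r * φ 0 (t - r) + xi p φ t r * ε (t - r) ω := fun r _ => by ring
    rw [Finset.sum_congr rfl h1, Finset.sum_add_distrib]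
    ring
  have hstar2 : y t =ᵐ[μ] fun ω => D ω + M ω := hsplit ▸ hstar
  have hDsm : StronglyMeasurable[𝓕 (t - (N : ℤ))] D := by
    apply StronglyMeasurable.add stronglyMeasurable_const
    apply Finset.stronglyMeasurable_fun_sum
    intro j hj
    have hj1 : 1 ≤ j := (Finset.mem_Icc.mp hj).1
    exact ((hymeas _).mono (𝓕.mono (by omega))).const_mul _
  have hDint : Integrable D μ :=
    (integrable_const _).add (integrable_finset_sum _ fun j hj => (hyint _).const_mul _)
  have hMint : Integrable M μ :=
    integrable_finset_sum _ fun r hr => ((hεL2 _).integrable one_le_two).const_mul _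
  have hεzero : ∀ r : ℕ, r < N → μ[ε (t - (r : ℤ)) | 𝓕 (t - (N : ℤ))] =ᵐ[μ] 0 := by
    intro r hr
    have h1 : 𝓕 (t - (N : ℤ)) ≤ 𝓕 (t - (r : ℤ) - 1) := 𝓕.mono (by omega)
    calc μ[ε (t - (r : ℤ)) | 𝓕 (t - (N : ℤ))]
        =ᵐ[μ] μ[μ[ε (t - (r : ℤ)) | 𝓕 (t - (r : ℤ) - 1)] | 𝓕 (t - (N : ℤ))] :=
          (condExp_condExp_of_le h1 (𝓕.le _)).symm
      _ =ᵐ[μ] μ[(0 : Ω → ℝ) | 𝓕 (t - (N : ℤ))] := condExp_congr_ae (hεmart (t - (r : ℤ)))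
      _ =ᵐ[μ] 0 := by rw [condExp_zero]
  have hMce : μ[M | 𝓕 (t - (N : ℤ))] =ᵐ[μ] 0 := by
    have h1 : M = ∑ r ∈ range N, (fun ω => xi p φ t r * ε (t - r) ω) := by
      funext ω; rw [hM, Finset.sum_apply]
    have h2 : ∀ r ∈ range N,
        μ[(fun ω => xi p φ t (r : ℤ) * ε (t - (r : ℤ)) ω) | 𝓕 (t - (N : ℤ))] =ᵐ[μ] 0 := by
      intro r hr
      have he : (fun ω => xi p φ t (r : ℤ) * ε (t - (r : ℤ)) ω)
          = xi p φ t (r : ℤ) • ε (t - (r : ℤ)) := by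
        funext ω; simp [smul_eq_mul]
      rw [he]
      refine (condExp_smul _ _ _).trans ?_
      filter_upwards [hεzero r (Finset.mem_range.mp hr)] with ω h
      simp [h]
    calc μ[M | 𝓕 (t - (N : ℤ))]
        =ᵐ[μ] ∑ r ∈ range N, μ[(fun ω => xi p φ t r * ε (t - r) ω) | 𝓕 (t - (N : ℤ))] := by
          rw [h1]
          exact condExp_finsetSum (fun r hr => ((hεL2 _).integrable one_le_two).const_mul _) _
      _ =ᵐ[μ] 0 := by
          filter_upwards [(Filter.eventually_all_finset (range N)).2 h2] with ω hω
          rw [Finset.sum_apply]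
          exact Finset.sum_eq_zero fun r hr => hω r hr
  have h4 : μ[D | 𝓕 (t - (N : ℤ))] = D := condExp_of_stronglyMeasurable (𝓕.le _) hDsm hDint
  have hyce : μ[y t | 𝓕 (t - (N : ℤ))] =ᵐ[μ] D := by
    have h5 : μ[y t | 𝓕 (t - (N : ℤ))]
        =ᵐ[μ] μ[D | 𝓕 (t - (N : ℤ))] + μ[M | 𝓕 (t - (N : ℤ))] :=
      (condExp_congr_ae hstar2).trans (condExp_add hDint hMint _)
    rw [h4] at h5
    refine h5.trans ?_
    filter_upwards [hMce] with ω h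
    simp [h]
  filter_upwards [hstar2, hyce] with ω h1 h2
  rw [h1, h2]
  ring

end AuxPAR

open MeasureTheory Filter

/-- The forecast error of the `N`-step-ahead predictor of a PAR(`p`) process. -/
theorem par_forecast_error
    (p : ℕ) (hp : 1 ≤ p) (φ : ℕ → ℤ → ℝ)
    {Ω : Type*} {m0 : MeasurableSpace Ω} {μ : Measure Ω} [IsProbabilityMeasure μ]
    (𝓕 : Filtration ℤ m0)
    (ε : ℤ → Ω → ℝ)
    (hεmeas : ∀ τ : ℤ, StronglyMeasurable[𝓕 τ] (ε τ))
    (hεL2 : ∀ τ : ℤ, MemLp (ε τ) 2 μ)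
    (hεmart : ∀ τ : ℤ, μ[ε τ | 𝓕 (τ - 1)] =ᵐ[μ] 0)
    (y : ℤ → Ω → ℝ)
    (hymeas : ∀ τ : ℤ, StronglyMeasurable[𝓕 τ] (y τ))
    (hyint : ∀ τ : ℤ, Integrable (y τ) μ)
    (hy : ∀ τ : ℤ, y τ =ᵐ[μ] fun ω =>
      φ 0 τ + (∑ m ∈ Finset.Icc 1 p, φ m τ * y (τ - m) ω) + ε τ ω)
    (t : ℤ) (N : ℕ) (hN : 1 ≤ N) :
    (fun ω => y t ω - (μ[y t | 𝓕 (t - N)]) ω) =ᵐ[μ]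
      fun ω => ∑ r ∈ Finset.range N, xi p φ t r * ε (t - r) ω := by
  exact par_forecast_error' p φ t hp 𝓕 ε hεmeas hεL2 hεmart y hymeas hyint hy N hN
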